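/- In any greedy run on a 2NC-TAP instance, the scaled dual vector (1/H(λ−1))·y is feasible for the dual LP (D): for every link ℓ ∈ L, Σ_{u non-leaf node of T} Σ_{𝒫 ∈ Ptn⊇(comps(T−u)) crossed by ℓ} y(𝒫) ≤ H(λ−1)·cost(ℓ). -/

import Mathlib

open scoped Classical
open Finset

namespace TwoNCTAP

variable {V : Type*}

/-- The graph `H` with the vertex `u` "deleted": all edges incident to `u` are removed,
so that `u` becomes an isolated vertex. -/
def delVert (H : SimpleGraph V) (u : V) : SimpleGraph V where
  Adj a b := H.Adj a b ∧ a ≠ u ∧ b ≠ u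
  symm := ⟨by rintro a b ⟨h, ha, hb⟩; exact ⟨h.symm, hb, ha⟩⟩
  loopless := ⟨by rintro a ⟨h, -, -⟩; exact H.irrefl h⟩

/-- The partition of `V ∖ {u}` into the vertex sets of the connected components of `H − u`. -/
def compPartition (H : SimpleGraph V) (u : V) : Set (Set V) :=
  {S | ∃ v, v ≠ u ∧ S = {w | (delVert H u).Reachable v w}}

/-- `P` is a partition of the set `S`. -/
def IsPartitionOf (P : Set (Set V)) (S : Set V) : Prop :=
  (∀ B ∈ P, B.Nonempty) ∧ (∀ B ∈ P, B ⊆ S) ∧ ∀ v ∈ S, ∃! B : Set V, B ∈ P ∧ v ∈ B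

/-- `P ∈ Ptn⊇(comps(T−u))`: `P` is a partition of `V ∖ {u}` each of whose blocks is a
union of vertex sets of connected components of `T − u`. -/
def PtnSup (T : SimpleGraph V) (u : V) (P : Set (Set V)) : Prop :=
  IsPartitionOf P {v | v ≠ u} ∧ ∀ B ∈ compPartition T u, ∃ C ∈ P, B ⊆ C

/-- An edge `e` crosses the partition `P` if its two endpoints lie in different blocks of `P`. -/
def Crosses (P : Set (Set V)) (e : Sym2 V) : Prop :=
  ∃ v w, e = s(v, w) ∧ ∃ B ∈ P, ∃ C ∈ P, B ≠ C ∧ v ∈ B ∧ w ∈ C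

/-- `u` is a non-leaf node of `T`. -/
def NonLeaf (T : SimpleGraph V) (u : V) : Prop := 1 < (T.neighborSet u).ncard

/-- The links of the instance: the edges of `G` that are not edges of the tree `T`. -/
def links (G T : SimpleGraph V) : Set (Sym2 V) := G.edgeSet \ T.edgeSet

variable [Fintype V]

/-- Feasibility for the partition LP (P) of the 2NC-TAP instance `(G, T, cost)`. -/
def FeasibleP (G T : SimpleGraph V) (x : Sym2 V → ℝ) : Prop :=
  (∀ ℓ ∈ links G T, 0 ≤ x ℓ) ∧
  ∀ u : V, NonLeaf T u → ∀ P : Set (Set V), PtnSup T u P →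
    (P.ncard : ℝ) - 1 ≤
      ∑ ℓ ∈ Finset.univ.filter (fun ℓ : Sym2 V => ℓ ∈ links G T ∧ Crosses P ℓ), x ℓ


/-- The tree `T` together with a set `F` of links added as edges. -/
def withLinks (T : SimpleGraph V) (F : Set (Sym2 V)) : SimpleGraph V :=
  T ⊔ SimpleGraph.fromEdgeSet F

/-- The current partition `𝒫^i_u` (0-indexed): the partition of `V ∖ {u}` into the vertex
sets of the connected components of `(T ∪ {ℓ_0, …, ℓ_{i−1}}) − u`. -/
def curPtn {m : ℕ} (T : SimpleGraph V) (ℓseq : Fin m → Sym2 V) (i : ℕ) (u : V) :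
    Set (Set V) :=
  compPartition (withLinks T {e | ∃ j : Fin m, (j : ℕ) < i ∧ ℓseq j = e}) u

/-- `inc^i(e)`: the set of non-leaf nodes `u` of `T` whose current partition (at the start
of iteration `i`, 0-indexed) is crossed by the link `e`. -/
def incSet {m : ℕ} (T : SimpleGraph V) (ℓseq : Fin m → Sym2 V) (i : ℕ)
    (e : Sym2 V) : Set V :=
  {u | NonLeaf T u ∧ Crosses (curPtn T ℓseq i u) e}

/-- A greedy run on the 2NC-TAP instance `(G, T, cost)`: a sequence of distinct links
`ℓ_0, …, ℓ_{m−1}` such that each `ℓ_i` minimizes the cost-coverage ratio at iteration `i`,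
and at the end every current partition is trivial (i.e. `T` plus the picked links
is 2-node-connected). -/
def IsGreedyRun (G T : SimpleGraph V) (cost : Sym2 V → ℝ) (m : ℕ)
    (ℓseq : Fin m → Sym2 V) : Prop :=
  Function.Injective ℓseq ∧
  (∀ i, ℓseq i ∈ links G T) ∧
  (∀ i : Fin m,
    (incSet T ℓseq (i : ℕ) (ℓseq i)).Nonempty ∧
    ∀ e ∈ links G T, (incSet T ℓseq (i : ℕ) e).Nonempty →
      cost (ℓseq i) / ((incSet T ℓseq (i : ℕ) (ℓseq i)).ncard : ℝ)
        ≤ cost e / ((incSet T ℓseq (i : ℕ) e).ncard : ℝ)) ∧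
  ∀ u : V, NonLeaf T u → curPtn T ℓseq m u = {{v | v ≠ u}}

/-- `ν(u)`: the number of connected components of `T − u`. -/
noncomputable def nblocks (T : SimpleGraph V) (u : V) : ℕ := (compPartition T u).ncard


/-- The `k`-th harmonic number `H(k) = 1 + 1/2 + ⋯ + 1/k`. -/
noncomputable def harm (k : ℕ) : ℝ := ∑ i ∈ Finset.range k, (1 : ℝ) / (i + 1)

/-- The dual values associated with a sequence `w` of assigned weights:
`yOf w 0 = w 0` and `yOf w j = w j − w (j−1)` for `j ≥ 1`. -/
def yOf {k : ℕ} (w : Fin k → ℝ) (j : Fin k) : ℝ :=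
  if (j : ℕ) = 0 then w j
  else w j - w ⟨(j : ℕ) - 1, lt_of_le_of_lt (Nat.sub_le _ _) j.isLt⟩


section Aux
set_option linter.unusedSectionVars false

lemma delVert_mono {H H' : SimpleGraph V} (h : H ≤ H') (u : V) :
    delVert H u ≤ delVert H' u := fun _ _ ⟨ha, h1, h2⟩ => ⟨h ha, h1, h2⟩

lemma delVert_adj {H : SimpleGraph V} {u a b : V} (h : H.Adj a b) (ha : a ≠ u)
    (hb : b ≠ u) : (delVert H u).Adj a b := ⟨h, ha, hb⟩

lemma reachable_delVert_of_walk {H : SimpleGraph V} {u a b : V} (p : H.Walk a b)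
    (hp : u ∉ p.support) : (delVert H u).Reachable a b := by
  induction p with
  | nil => exact SimpleGraph.Reachable.refl _
  | @cons x y z h q ih =>
    rw [SimpleGraph.Walk.support_cons, List.mem_cons] at hp
    push_neg at hp
    have hy : u ≠ y := fun hc => hp.2 (hc ▸ q.start_mem_support)
    exact ((delVert_adj h (Ne.symm hp.1) (Ne.symm hy)).reachable).trans (ih hp.2)

lemma eq_of_reachable_delVert {H : SimpleGraph V} {u x : V}
    (h : (delVert H u).Reachable x u) : x = u := by
  obtain ⟨p⟩ := h.symm
  cases p with
  | nil => rfl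
  | cons had q => exact absurd rfl had.2.1

lemma crosses_compPartition_iff (H : SimpleGraph V) (u a b : V) :
    Crosses (compPartition H u) s(a, b) ↔
      a ≠ u ∧ b ≠ u ∧ ¬ (delVert H u).Reachable a b := by
  constructor
  · rintro ⟨v, w, hvw, B, ⟨x, hx, rfl⟩, C, ⟨y, hy, rfl⟩, hBC, hvB, hwC⟩
    have hvB' : (delVert H u).Reachable x v := hvB
    have hwC' : (delVert H u).Reachable y w := hwC
    have hv : v ≠ u := fun hc => hx (eq_of_reachable_delVert (hc ▸ hvB'))
    have hwne : w ≠ u := fun hc => hy (eq_of_reachable_delVert (hc ▸ hwC'))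
    have hnr : ¬ (delVert H u).Reachable v w := by
      intro hr
      apply hBC
      have hxy : (delVert H u).Reachable x y := (hvB'.trans hr).trans hwC'.symm
      ext z
      exact ⟨fun hz => hxy.symm.trans hz, fun hz => hxy.trans hz⟩
    rw [Sym2.eq_iff] at hvw
    rcases hvw with ⟨rfl, rfl⟩ | ⟨rfl, rfl⟩
    · exact ⟨hv, hwne, hnr⟩
    · exact ⟨hwne, hv, fun hr => hnr hr.symm⟩
  · rintro ⟨ha, hb, hnr⟩
    refine ⟨a, b, rfl, {z | (delVert H u).Reachable a z}, ⟨a, ha, rfl⟩,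
      {z | (delVert H u).Reachable b z}, ⟨b, hb, rfl⟩, ?_,
      SimpleGraph.Reachable.refl a, SimpleGraph.Reachable.refl b⟩
    intro hc
    exact hnr (by rw [hc]; exact SimpleGraph.Reachable.refl b :
      b ∈ {z | (delVert H u).Reachable a z})

lemma crosses_curPtn_anti {m : ℕ} (T : SimpleGraph V) (ℓseq : Fin m → Sym2 V)
    (u a b : V) {i i' : ℕ} (hii : i' ≤ i)
    (h : Crosses (curPtn T ℓseq i u) s(a, b)) :
    Crosses (curPtn T ℓseq i' u) s(a, b) := by
  rw [curPtn, crosses_compPartition_iff] at h ⊢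
  refine ⟨h.1, h.2.1, fun hr => h.2.2 (hr.mono (delVert_mono ?_ u))⟩
  refine sup_le_sup_left (SimpleGraph.fromEdgeSet_mono ?_) T
  rintro e ⟨j, hj, rfl⟩
  exact ⟨j, lt_of_lt_of_le hj hii, rfl⟩

lemma curPtn_zero {m : ℕ} (T : SimpleGraph V) (ℓseq : Fin m → Sym2 V) (u : V) :
    curPtn T ℓseq 0 u = compPartition T u := by
  unfold curPtn withLinks
  have h : {e : Sym2 V | ∃ j : Fin m, (j : ℕ) < 0 ∧ ℓseq j = e} = ∅ := by
    ext e; simp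
  rw [h, SimpleGraph.fromEdgeSet_empty, sup_bot_eq]

lemma tele_sum {k : ℕ} (w : Fin k → ℝ) :
    ∀ n (h : n < k),
      ∑ j ∈ Finset.univ.filter (fun j : Fin k => (j : ℕ) ≤ n), yOf w j = w ⟨n, h⟩ := by
  intro n
  induction n with
  | zero =>
    intro h
    have : Finset.univ.filter (fun j : Fin k => (j : ℕ) ≤ 0) = {⟨0, h⟩} := by
      ext j
      simp [Fin.ext_iff, Nat.le_zero]
    rw [this, Finset.sum_singleton, yOf, if_pos rfl]
  | succ n ih =>
    intro h
    have hn : n < k := Nat.lt_of_succ_lt h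
    have hsplit : Finset.univ.filter (fun j : Fin k => (j : ℕ) ≤ n + 1) =
        insert ⟨n + 1, h⟩ (Finset.univ.filter (fun j : Fin k => (j : ℕ) ≤ n)) := by
      ext j
      simp only [Finset.mem_filter, Finset.mem_univ, true_and, Finset.mem_insert,
        Fin.ext_iff]
      omega
    have hnotmem : (⟨n + 1, h⟩ : Fin k) ∉
        Finset.univ.filter (fun j : Fin k => (j : ℕ) ≤ n) := by
      simp
    rw [hsplit, Finset.sum_insert hnotmem, ih hn, yOf]
    simp

lemma harm_nonneg (k : ℕ) : 0 ≤ harm k := by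
  apply Finset.sum_nonneg
  intro i _
  positivity

lemma harm_mono {k l : ℕ} (h : k ≤ l) : harm k ≤ harm l := by
  apply Finset.sum_le_sum_of_subset_of_nonneg (Finset.range_subset_range.2 h)
  intro i _ _
  positivity

lemma harm_succ (n : ℕ) : harm (n + 1) = harm n + 1 / (n + 1) := by
  rw [harm, Finset.sum_range_succ]; rfl

lemma harm_count_bound {α : Type*} [DecidableEq α] (g : α → ℕ) :
    ∀ (n : ℕ) (U : Finset α), U.card = n →
      ∑ u ∈ U, (1 : ℝ) / ((U.filter (fun u' => g u ≤ g u')).card : ℝ) ≤ harm n := by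
  intro n
  induction n with
  | zero =>
    intro U hU
    rw [Finset.card_eq_zero.1 hU]
    simp [harm]
  | succ n ih =>
    intro U hU
    have hne : U.Nonempty := Finset.card_pos.1 (by omega)
    obtain ⟨u0, hu0, hmin⟩ := U.exists_min_image g hne
    have hfull : U.filter (fun u' => g u0 ≤ g u') = U := by
      apply Finset.filter_true_of_mem
      intro u' hu'
      exact hmin u' hu'
    have hsum : ∑ u ∈ U, (1 : ℝ) / ((U.filter (fun u' => g u ≤ g u')).card : ℝ) =
        (1 : ℝ) / ((U.filter (fun u' => g u0 ≤ g u')).card : ℝ) +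
        ∑ u ∈ U.erase u0, (1 : ℝ) / ((U.filter (fun u' => g u ≤ g u')).card : ℝ) :=
      (Finset.add_sum_erase U _ hu0).symm
    rw [hsum, hfull, hU]
    have hcard : (U.erase u0).card = n := by
      rw [Finset.card_erase_of_mem hu0, hU]; omega
    have hterm : ∑ u ∈ U.erase u0, (1 : ℝ) / ((U.filter (fun u' => g u ≤ g u')).card : ℝ)
        ≤ ∑ u ∈ U.erase u0,
            (1 : ℝ) / (((U.erase u0).filter (fun u' => g u ≤ g u')).card : ℝ) := by
      apply Finset.sum_le_sum
      intro u hu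
      have hsub : (U.erase u0).filter (fun u' => g u ≤ g u') ⊆
          U.filter (fun u' => g u ≤ g u') :=
        Finset.filter_subset_filter _ (Finset.erase_subset u0 U)
      have hpos : 0 < ((U.erase u0).filter (fun u' => g u ≤ g u')).card :=
        Finset.card_pos.2 ⟨u, Finset.mem_filter.2 ⟨hu, le_refl _⟩⟩
      apply one_div_le_one_div_of_le
      · exact_mod_cast hpos
      · exact_mod_cast Finset.card_le_card hsub
    calc (1 : ℝ) / ((n + 1 : ℕ) : ℝ) +
          ∑ u ∈ U.erase u0, (1 : ℝ) / ((U.filter (fun u' => g u ≤ g u')).card : ℝ)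
        ≤ (1 : ℝ) / ((n + 1 : ℕ) : ℝ) + harm n := by
          apply add_le_add (le_refl _)
          exact le_trans hterm (ih (U.erase u0) hcard)
      _ = harm (n + 1) := by rw [harm_succ]; push_cast; ring

end Aux

/-- In any greedy run on a 2NC-TAP instance, the scaled dual vector
`(1/H(λ−1))·y` is feasible for the dual LP (D): for every link `ℓ`, the sum over all
non-leaf nodes `u` and all partitions of `u` crossed by `ℓ` of the dual values `y(𝒫)`
is at most `H(λ−1)·cost(ℓ)`. Here `λ` is the maximum number of edges of a tree path
`T(ℓ')` over all links `ℓ'`, and the (finitely many) partitions of `u` carrying a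
nonzero dual value are the hatted partitions `curPtn T ℓseq (sig u j) u`. -/
theorem scaled_dual_feasible
    (G T : SimpleGraph V) (hV : 3 ≤ Fintype.card V) (hTG : T ≤ G) (hT : T.IsTree)
    (cost : Sym2 V → ℝ) (hcost : ∀ e ∈ links G T, 0 ≤ cost e)
    (lam : ℕ)
    (hlam : IsGreatest {d : ℕ | ∃ v w : V, s(v, w) ∈ links G T ∧ d = T.dist v w} lam)
    (m : ℕ) (ℓseq : Fin m → Sym2 V) (hrun : IsGreedyRun G T cost m ℓseq)
    (sig : (u : V) → Fin (nblocks T u - 1) → Fin m)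
    (hsig : ∀ u : V, NonLeaf T u → StrictMono (sig u) ∧
      ∀ i : Fin m, Crosses (curPtn T ℓseq (i : ℕ) u) (ℓseq i) ↔ ∃ j, sig u j = i)
    (w : (u : V) → Fin (nblocks T u - 1) → ℝ)
    (hw : ∀ (u : V) (j : Fin (nblocks T u - 1)),
      w u j = cost (ℓseq (sig u j)) /
        ((incSet T ℓseq ((sig u j : Fin m) : ℕ) (ℓseq (sig u j))).ncard : ℝ)) :
    ∀ ℓ ∈ links G T,
      ∑ u ∈ Finset.univ.filter (fun u : V => NonLeaf T u),
        ∑ j ∈ Finset.univ.filter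
            (fun j : Fin (nblocks T u - 1) =>
              Crosses (curPtn T ℓseq ((sig u j : Fin m) : ℕ) u) ℓ),
          yOf (w u) j
        ≤ harm (lam - 1) * cost ℓ := by
  intro ℓ hℓ
  induction ℓ using Sym2.ind with
  | _ a b =>
  have hGadj : G.Adj a b := hℓ.1
  have hab : a ≠ b := hGadj.ne
  have hcost' : 0 ≤ cost s(a, b) := hcost _ hℓ
  -- the tree path from a to b
  obtain ⟨p, hp, hplen⟩ := hT.isConnected.exists_path_of_dist a b
  have hdist : T.dist a b ≤ lam := hlam.2 ⟨a, b, hℓ, rfl⟩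
  have hplam : p.length ≤ lam := hplen ▸ hdist
  -- notation
  set NL : Finset V := Finset.univ.filter (fun u : V => NonLeaf T u) with hNL
  set Ju : (u : V) → Finset (Fin (nblocks T u - 1)) := fun u =>
    Finset.univ.filter
      (fun j : Fin (nblocks T u - 1) =>
        Crosses (curPtn T ℓseq ((sig u j : Fin m) : ℕ) u) s(a, b)) with hJu
  set U : Finset V := NL.filter (fun u => (Ju u).Nonempty) with hU
  have hUNL : ∀ u ∈ U, NonLeaf T u := by
    intro u hu
    have := (Finset.mem_filter.1 hu).1
    exact (Finset.mem_filter.1 this).2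
  have hUne : ∀ u ∈ U, (Ju u).Nonempty := fun u hu => (Finset.mem_filter.1 hu).2
  -- the "last crossing time" function
  set g : V → ℕ := fun u =>
    if h : (Ju u).Nonempty then ((sig u ((Ju u).max' h) : Fin m) : ℕ) else 0 with hg
  -- each u in U crosses at time g u
  have hcrossg : ∀ u ∈ U, Crosses (curPtn T ℓseq (g u) u) s(a, b) := by
    intro u hu
    have hne := hUne u hu
    have hmem := (Ju u).max'_mem hne
    have : Crosses (curPtn T ℓseq ((sig u ((Ju u).max' hne) : Fin m) : ℕ) u) s(a, b) :=
      (Finset.mem_filter.1 hmem).2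
    simpa [hg, dif_pos hne] using this
  -- restrict the outer sum to U
  have hsum0 :
      ∑ u ∈ NL, ∑ j ∈ Ju u, yOf (w u) j = ∑ u ∈ U, ∑ j ∈ Ju u, yOf (w u) j := by
    refine (Finset.sum_subset (Finset.filter_subset _ _) ?_).symm
    intro u hu hnu
    have : ¬ (Ju u).Nonempty := fun h => hnu (Finset.mem_filter.2 ⟨hu, h⟩)
    rw [Finset.not_nonempty_iff_eq_empty.1 this, Finset.sum_empty]
  rw [hsum0]
  -- termwise bound
  have hterm : ∀ u ∈ U,
      ∑ j ∈ Ju u, yOf (w u) j ≤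
        cost s(a, b) / ((U.filter (fun u' => g u ≤ g u')).card : ℝ) := by
    intro u hu
    have hNLu : NonLeaf T u := hUNL u hu
    have hne := hUne u hu
    set t : Fin (nblocks T u - 1) := (Ju u).max' hne with ht
    have hgu : g u = ((sig u t : Fin m) : ℕ) := by simp [hg, dif_pos hne]; rfl
    -- Ju u is the down-set below t
    have hdown : Ju u =
        Finset.univ.filter (fun j : Fin (nblocks T u - 1) => (j : ℕ) ≤ (t : ℕ)) := by
      ext j
      simp only [hJu, Finset.mem_filter, Finset.mem_univ, true_and]
      constructor
      · intro hj
        exact (Ju u).le_max' j (by simp [hJu, hj])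
      · intro hj
        have hmono : sig u j ≤ sig u t := ((hsig u hNLu).1).monotone hj
        exact crosses_curPtn_anti T ℓseq u a b hmono
          ((Finset.mem_filter.1 ((Ju u).max'_mem hne)).2)
    have hinner : ∑ j ∈ Ju u, yOf (w u) j = w u t := by
      rw [hdown, tele_sum (w u) (t : ℕ) t.isLt]
    -- greedy bound
    have huinc : u ∈ incSet T ℓseq (g u) s(a, b) :=
      ⟨hNLu, hcrossg u hu⟩
    have hincne : (incSet T ℓseq (g u) s(a, b)).Nonempty := ⟨u, huinc⟩
    have hgr := (hrun.2.2.1 (sig u t)).2 s(a, b) hℓ (hgu ▸ hincne)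
    have hw' : w u t ≤
        cost s(a, b) / ((incSet T ℓseq (g u) s(a, b)).ncard : ℝ) := by
      rw [hw u t, hgu]
      exact hgr
    -- counting bound on the incidence set
    have hsub : ↑(U.filter (fun u' => g u ≤ g u')) ⊆ incSet T ℓseq (g u) s(a, b) := by
      intro u' hu'
      simp only [Finset.coe_filter, Set.mem_setOf_eq] at hu'
      obtain ⟨hu'U, hle⟩ := hu'
      refine ⟨hUNL u' hu'U, ?_⟩
      exact crosses_curPtn_anti T ℓseq u' a b hle (hcrossg u' hu'U)
    have hcardle : ((U.filter (fun u' => g u ≤ g u')).card : ℝ) ≤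
        ((incSet T ℓseq (g u) s(a, b)).ncard : ℝ) := by
      have := Set.ncard_le_ncard hsub (Set.toFinite _)
      rw [Set.ncard_coe_finset] at this
      exact_mod_cast this
    have hfpos : (0 : ℝ) < ((U.filter (fun u' => g u ≤ g u')).card : ℝ) := by
      have : u ∈ U.filter (fun u' => g u ≤ g u') :=
        Finset.mem_filter.2 ⟨hu, le_refl _⟩
      have := Finset.card_pos.2 ⟨u, this⟩
      exact_mod_cast this
    calc ∑ j ∈ Ju u, yOf (w u) j = w u t := hinner
      _ ≤ cost s(a, b) / ((incSet T ℓseq (g u) s(a, b)).ncard : ℝ) := hw'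
      _ ≤ cost s(a, b) / ((U.filter (fun u' => g u ≤ g u')).card : ℝ) := by
          exact div_le_div_of_nonneg_left hcost' hfpos hcardle
  -- bound the cardinality of U by lam - 1
  have hUsub : U ⊆ p.support.toFinset \ {a, b} := by
    intro u hu
    have h0 : Crosses (curPtn T ℓseq 0 u) s(a, b) :=
      crosses_curPtn_anti T ℓseq u a b (Nat.zero_le _) (hcrossg u hu)
    rw [curPtn_zero, crosses_compPartition_iff] at h0
    obtain ⟨hau, hbu, hnr⟩ := h0
    have hmem : u ∈ p.support := by
      by_contra hc
      exact hnr (reachable_delVert_of_walk p hc)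
    rw [Finset.mem_sdiff, List.mem_toFinset]
    refine ⟨hmem, ?_⟩
    simp only [Finset.mem_insert, Finset.mem_singleton]
    push_neg
    exact ⟨Ne.symm hau, Ne.symm hbu⟩
  have hUcard : U.card ≤ lam - 1 := by
    have habs : ({a, b} : Finset V) ⊆ p.support.toFinset := by
      intro x hx
      rw [List.mem_toFinset]
      rcases Finset.mem_insert.1 hx with rfl | hx
      · exact p.start_mem_support
      · rw [Finset.mem_singleton] at hx
        exact hx ▸ p.end_mem_support
    have hcard1 : p.support.toFinset.card = p.length + 1 := by
      rw [List.toFinset_card_of_nodup hp.support_nodup,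
        SimpleGraph.Walk.length_support]
    have := Finset.card_le_card hUsub
    rw [Finset.card_sdiff_of_subset habs, hcard1, Finset.card_pair hab] at this
    omega
  -- put everything together
  calc ∑ u ∈ U, ∑ j ∈ Ju u, yOf (w u) j
      ≤ ∑ u ∈ U, cost s(a, b) / ((U.filter (fun u' => g u ≤ g u')).card : ℝ) :=
        Finset.sum_le_sum hterm
    _ = cost s(a, b) *
        ∑ u ∈ U, (1 : ℝ) / ((U.filter (fun u' => g u ≤ g u')).card : ℝ) := by
        rw [Finset.mul_sum]
        exact Finset.sum_congr rfl fun u _ => by ring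
    _ ≤ cost s(a, b) * harm U.card :=
        mul_le_mul_of_nonneg_left (harm_count_bound g U.card U rfl) hcost'
    _ ≤ cost s(a, b) * harm (lam - 1) :=
        mul_le_mul_of_nonneg_left (harm_mono hUcard) hcost'
    _ = harm (lam - 1) * cost s(a, b) := mul_comm _ _


end TwoNCTAP
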